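/- Let A be a commutative integral domain with fraction field K, let I be an ideal of A, and let f = f₁·f₂ ∈ I with f, f₁, f₂ all nonzero. Let I₁ be the ideal of A generated by I together with f₁, and let A¹ = A[I₁/f₁] ⊆ K. Let I² be the ideal of A¹ generated by the elements b/f₁ for b ∈ I (these lie in A¹ since I ⊆ I₁), and note f₂ = f/f₁ ∈ I². Then A[I/f] = A¹[I²/f₂], i.e. the A¹-subalgebra of K generated by the fractions c/f₂ with c ∈ I² equals the affine modification A[I/f]. -/
import Mathlib


/-- The affine modification `B[J/g]` of a domain `B` inside a field `K` containing `B`: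
the `B`-subalgebra of `K` generated by the fractions `b/g` with `b ∈ J`. -/
def affineModification (B K : Type*) [CommRing B] [Field K] [Algebra B K]
    (J : Ideal B) (g : B) : Subalgebra B K :=
  Algebra.adjoin B ((fun b => algebraMap B K b / algebraMap B K g) '' (J : Set B))

/-- **Theorem 2.1(3)**: factorization of an affine modification through a partial
modification.  If `f = f₁·f₂ ∈ I`, `I₁ = (I, f₁)`, `A¹ = A[I₁/f₁]`, and `I²` is the
ideal of `A¹` generated by `I/f₁`, then `A[I/f] = A¹[I²/f₂]` (as subrings of the
fraction field `K`). -/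
theorem stmt2 (A K : Type*) [CommRing A] [IsDomain A] [Field K] [Algebra A K]
    [IsFractionRing A K] (I : Ideal A) (f f₁ f₂ : A) (hmul : f = f₁ * f₂) (hfI : f ∈ I)
    (hf : f ≠ 0) (hf₁ : f₁ ≠ 0) (hf₂ : f₂ ≠ 0) :
    (affineModification A K I f : Set K) =
      (affineModification (↥(affineModification A K (I ⊔ Ideal.span {f₁}) f₁)) K
        (Ideal.span {x : ↥(affineModification A K (I ⊔ Ideal.span {f₁}) f₁) |
          ∃ b ∈ I, (x : K) = algebraMap A K b / algebraMap A K f₁})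
        ⟨algebraMap A K f₂, Subalgebra.algebraMap_mem _ f₂⟩ : Set K) := by
  have hinj : Function.Injective (algebraMap A K) := IsFractionRing.injective A K
  have hfK : algebraMap A K f ≠ 0 := fun h => hf (hinj (by simpa using h))
  have hf₁K : algebraMap A K f₁ ≠ 0 := fun h => hf₁ (hinj (by simpa using h))
  have hf₂K : algebraMap A K f₂ ≠ 0 := fun h => hf₂ (hinj (by simpa using h))
  set A1 := affineModification A K (I ⊔ Ideal.span {f₁}) f₁ with hA1
  set I2 : Ideal A1 := Ideal.span {x : A1 |
      ∃ b ∈ I, (x : K) = algebraMap A K b / algebraMap A K f₁} with hI2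
  set L := affineModification A K I f with hL
  -- key div identity: for b ∈ A, b/f₁ = (b*f₂)/f in K
  have key : ∀ b : A, algebraMap A K b / algebraMap A K f₁
      = algebraMap A K (b * f₂) / algebraMap A K f := by
    intro b
    rw [hmul, map_mul, map_mul, mul_div_mul_right _ _ hf₂K]
  -- Step 1: A¹ ⊆ L (as subalgebras of A over K)
  have hA1L : ∀ x : A1, (x : K) ∈ L := by
    have : A1 ≤ L := by
      apply Algebra.adjoin_le
      rintro _ ⟨b₁, hb₁, rfl⟩
      rcases Submodule.mem_sup.mp hb₁ with ⟨b, hb, c, hc, rfl⟩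
      rcases Ideal.mem_span_singleton'.mp hc with ⟨a, rfl⟩
      simp only [map_add]
      rw [add_div]
      apply add_mem
      · rw [key b]
        exact Algebra.subset_adjoin ⟨b * f₂, I.mul_mem_right f₂ hb, rfl⟩
      · rw [map_mul, mul_div_assoc, div_self hf₁K, mul_one]
        exact Subalgebra.algebraMap_mem _ a
    exact fun x => this x.2
  -- generators of I2 divided by f₂ lie in L
  have hI2L : ∀ c : A1, c ∈ I2 → (c : K) / algebraMap A K f₂ ∈ L := by
    intro c hc
    refine Submodule.span_induction ?_ ?_ ?_ ?_ hc
    · rintro x ⟨b, hb, hx⟩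
      rw [hx, div_div, ← map_mul, ← hmul]
      exact Algebra.subset_adjoin ⟨b, hb, rfl⟩
    · simpa using (zero_mem L : (0 : K) ∈ L)
    · intro x y _ _ hx hy
      rw [Subalgebra.coe_add, add_div]
      exact add_mem hx hy
    · intro a x _ hx
      rw [smul_eq_mul, MulMemClass.coe_mul, mul_div_assoc]
      exact mul_mem (hA1L a) hx
  apply Set.Subset.antisymm
  · -- L ⊆ RHS
    intro z hz
    refine Algebra.adjoin_induction ?_ ?_ ?_ ?_ hz
    · rintro _ ⟨b, hb, rfl⟩
      show algebraMap A K b / algebraMap A K f ∈ _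
      have hbA1 : algebraMap A K b / algebraMap A K f₁ ∈ A1 := by
        apply Algebra.subset_adjoin
        exact ⟨b, Ideal.mem_sup_left hb, rfl⟩
      have hx2 : (⟨_, hbA1⟩ : A1) ∈ I2 := Submodule.subset_span ⟨b, hb, rfl⟩
      have : algebraMap A K b / algebraMap A K f
          = algebraMap A1 K ⟨_, hbA1⟩ / algebraMap A1 K
              ⟨algebraMap A K f₂, Subalgebra.algebraMap_mem _ f₂⟩ := by
        show _ = (algebraMap A K b / algebraMap A K f₁) / algebraMap A K f₂
        rw [div_div, ← map_mul, ← hmul]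
      rw [this]
      exact Algebra.subset_adjoin ⟨⟨_, hbA1⟩, hx2, rfl⟩
    · intro r
      have : algebraMap A K r = algebraMap A1 K (algebraMap A A1 r) := rfl
      rw [this]
      exact Subalgebra.algebraMap_mem _ _
    · intro x y _ _ hx hy; exact add_mem hx hy
    · intro x y _ _ hx hy; exact mul_mem hx hy
  · -- RHS ⊆ L
    intro z hz
    refine Algebra.adjoin_induction ?_ ?_ ?_ ?_ hz
    · rintro _ ⟨c, hc, rfl⟩
      exact hI2L c hc
    · intro r; exact hA1L r
    · intro x y _ _ hx hy; exact add_mem hx hy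
    · intro x y _ _ hx hy; exact mul_mem hx hy
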